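/- Let (z_k)_{k≥0} be a sequence in a Euclidean space, (E_k)_{k≥1} a nonincreasing sequence of nonnegative reals with E_k → 0, (g_k)_{k≥1} a sequence of nonnegative reals, a, b > 0, τ > 0, k₁ ≥ 1, and φ : [0,τ) → [0,∞) continuous and concave with φ(0) = 0, φ continuously differentiable on (0,τ) with φ' > 0 on (0,τ). Suppose: (i) E_k − E_{k+1} ≥ a‖z_{k+1} − z_k‖² for all k ≥ 1; (ii) g_k ≤ b‖z_k − z_{k−1}‖ for all k ≥ 1; (iii) E_{k₁} < τ and for all k ≥ k₁ with E_k > 0 one has φ'(E_k)·g_k ≥ 1. Then ∑_{k≥1} ‖z_{k+1} − z_k‖ < ∞; in particular (z_k) converges. -/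

import Mathlib

/-- Abstract finite-length property under the KŁ mechanism: if the gap sequence
`E_k` decreases sufficiently (`E_k − E_{k+1} ≥ a‖z_{k+1}−z_k‖²`), the KŁ quantity
`g_k` satisfies `g_k ≤ b‖z_k−z_{k−1}‖` and `φ'(E_k)·g_k ≥ 1` from some index on,
then `∑ ‖z_{k+1}−z_k‖ < ∞` and `(z_k)` converges. -/
theorem stmt_12 (d : ℕ) (z : ℕ → EuclideanSpace ℝ (Fin d))
    (E g : ℕ → ℝ) (a b τ : ℝ) (k₁ : ℕ)
    (ha : 0 < a) (hb : 0 < b) (hτ : 0 < τ) (hk₁ : 1 ≤ k₁)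
    (hEnonneg : ∀ k ≥ 1, 0 ≤ E k)
    (hEmono : ∀ k ≥ 1, E (k + 1) ≤ E k)
    (hEto0 : Filter.Tendsto E Filter.atTop (nhds 0))
    (hgnonneg : ∀ k ≥ 1, 0 ≤ g k)
    (φ dφ : ℝ → ℝ)
    (hφcont : ContinuousOn φ (Set.Ico 0 τ))
    (hφ0 : φ 0 = 0)
    (hφnonneg : ∀ s ∈ Set.Ico (0 : ℝ) τ, 0 ≤ φ s)
    (hφconc : ConcaveOn ℝ (Set.Ico 0 τ) φ)
    (hφderiv : ∀ s ∈ Set.Ioo (0 : ℝ) τ, HasDerivAt φ (dφ s) s)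
    (hdφcont : ContinuousOn dφ (Set.Ioo 0 τ))
    (hdφpos : ∀ s ∈ Set.Ioo (0 : ℝ) τ, 0 < dφ s)
    (hsuffdec : ∀ k ≥ 1, a * ‖z (k + 1) - z k‖ ^ 2 ≤ E k - E (k + 1))
    (hgbound : ∀ k ≥ 1, g k ≤ b * ‖z k - z (k - 1)‖)
    (hEk₁ : E k₁ < τ)
    (hKL : ∀ k ≥ k₁, 0 < E k → 1 ≤ dφ (E k) * g k) :
    Summable (fun k => ‖z (k + 1) - z k‖) ∧
      ∃ zs : EuclideanSpace ℝ (Fin d),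
        Filter.Tendsto z Filter.atTop (nhds zs) := by
  set D : ℕ → ℝ := fun k => ‖z (k + 1) - z k‖ with hD
  -- E is antitone on [1, ∞)
  have hEa : ∀ m, 1 ≤ m → ∀ n, m ≤ n → E n ≤ E m := by
    intro m hm n hn
    induction n, hn using Nat.le_induction with
    | base => exact le_refl _
    | succ n hn ih => exact le_trans (hEmono n (le_trans hm hn)) ih
  -- membership facts
  have hEmem : ∀ k, k₁ ≤ k → E k ∈ Set.Ico (0 : ℝ) τ := by
    intro k hk
    exact ⟨hEnonneg k (le_trans hk₁ hk), lt_of_le_of_lt (hEa k₁ hk₁ k hk) hEk₁⟩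
  -- key per-step inequality
  have hkey : ∀ k, k₁ ≤ k →
      2 * D k ≤ D (k - 1) + (b / a) * (φ (E k) - φ (E (k + 1))) := by
    intro k hk
    have hk1 : 1 ≤ k := le_trans hk₁ hk
    have hzk : k - 1 + 1 = k := by omega
    have hDk1 : D (k - 1) = ‖z k - z (k - 1)‖ := by rw [hD]; simp only [hzk]
    have hEk := hEmem k hk
    have hEk1 : E (k + 1) ∈ Set.Ico (0 : ℝ) τ := hEmem (k + 1) (le_trans hk (Nat.le_succ k))
    have hdec := hsuffdec k hk1
    rcases eq_or_lt_of_le hEk.1 with h0 | hpos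
    · -- E k = 0, hence E (k+1) = 0 and D k = 0
      have h1 : E (k + 1) = 0 := le_antisymm (by linarith [hEmono k hk1]) hEk1.1
      have hDk0 : D k = 0 := by
        have h2 : a * D k ^ 2 ≤ 0 := by rw [← h0, h1] at hdec; linarith
        have h3 : D k ^ 2 = 0 := le_antisymm (by nlinarith) (sq_nonneg _)
        exact (pow_eq_zero_iff two_ne_zero).mp h3
      have hφeq : φ (E k) = φ (E (k + 1)) := by rw [← h0, h1]
      have hDk1nn : (0:ℝ) ≤ D (k - 1) := norm_nonneg _
      rw [hDk0, hφeq]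
      simp
      linarith
    · -- E k > 0
      have hx : E k ∈ Set.Ioo (0 : ℝ) τ := ⟨hpos, hEk.2⟩
      have hg1 : 1 ≤ dφ (E k) * g k := hKL k hk hpos
      have hgpos : 0 < g k := by
        rcases lt_or_ge 0 (g k) with h | h
        · exact h
        · exfalso; nlinarith [hdφpos (E k) hx, hgnonneg k hk1]
      -- tangent inequality: Δφ ≥ dφ(E k) * (E k - E (k+1))
      have hΔ : dφ (E k) * (E k - E (k + 1)) ≤ φ (E k) - φ (E (k + 1)) := by
        rcases eq_or_lt_of_le (hEmono k hk1) with heq | hlt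
        · rw [heq]; simp
        · have hsl := hφconc.le_slope_of_hasDerivAt hEk1 hEk hlt (hφderiv (E k) hx)
          rw [slope_def_field] at hsl
          have hd : (0 : ℝ) < E k - E (k + 1) := by linarith
          rw [le_div_iff₀ hd] at hsl
          exact hsl
      have hΔnn : 0 ≤ φ (E k) - φ (E (k + 1)) := by
        nlinarith [hdφpos (E k) hx, hEmono k hk1]
      -- a * D k ^2 ≤ g k * Δφ ≤ b * D(k-1) * Δφ
      have h2 : a * D k ^ 2 ≤ g k * (φ (E k) - φ (E (k + 1))) := by
        have hd1 : 1 / g k ≤ dφ (E k) := by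
          rw [div_le_iff₀ hgpos]; linarith [mul_comm (dφ (E k)) (g k)]
        have : (1 / g k) * (E k - E (k + 1)) ≤ φ (E k) - φ (E (k + 1)) := by
          have hEd : 0 ≤ E k - E (k + 1) := by linarith [hEmono k hk1]
          calc (1 / g k) * (E k - E (k + 1)) ≤ dφ (E k) * (E k - E (k + 1)) :=
                mul_le_mul_of_nonneg_right hd1 hEd
            _ ≤ _ := hΔ
        calc a * D k ^ 2 ≤ E k - E (k + 1) := hdec
          _ = g k * ((1 / g k) * (E k - E (k + 1))) := by field_simp
          _ ≤ g k * (φ (E k) - φ (E (k + 1))) :=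
              mul_le_mul_of_nonneg_left this (le_of_lt hgpos)
      have h3 : a * D k ^ 2 ≤ b * D (k - 1) * (φ (E k) - φ (E (k + 1))) := by
        have := hgbound k hk1
        rw [← hDk1] at this
        nlinarith
      -- AM-GM
      have hDknn : 0 ≤ D k := norm_nonneg _
      have hDk1nn : 0 ≤ D (k - 1) := norm_nonneg _
      have hc : 0 ≤ b / a := (div_pos hb ha).le
      have hb' : b = b / a * a := (div_mul_cancel₀ b ha.ne').symm
      have h4 : D k ^ 2 ≤ b / a * D (k - 1) * (φ (E k) - φ (E (k + 1))) := by
        rw [hb'] at h3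
        have h5 : a * (D k ^ 2) ≤
            a * (b / a * D (k - 1) * (φ (E k) - φ (E (k + 1)))) := by nlinarith [h3]
        exact (mul_le_mul_iff_right₀ ha).mp h5
      have hrnn : 0 ≤ D (k - 1) + b / a * (φ (E k) - φ (E (k + 1))) := by
        have := mul_nonneg hc hΔnn; linarith
      have h6 : (2 * D k) ^ 2 ≤ (D (k - 1) + b / a * (φ (E k) - φ (E (k + 1)))) ^ 2 := by
        nlinarith [h4, sq_nonneg (D (k - 1) - b / a * (φ (E k) - φ (E (k + 1))))]
      exact (pow_le_pow_iff_left₀ (by linarith) hrnn two_ne_zero).mp h6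
  -- bounded partial sums via telescoping invariant
  have hinv : ∀ n : ℕ, (∑ i ∈ Finset.range n, D (k₁ + i)) + D (k₁ + n - 1) ≤
      D (k₁ - 1) + (b / a) * (φ (E k₁) - φ (E (k₁ + n))) := by
    intro n
    induction n with
    | zero => simp
    | succ n ih =>
      have hkeyn := hkey (k₁ + n) (Nat.le_add_right _ _)
      have e1 : k₁ + (n + 1) - 1 = k₁ + n := by omega
      have e2 : k₁ + n + 1 = k₁ + (n + 1) := by omega
      rw [Finset.sum_range_succ, e1]
      rw [e2] at hkeyn
      linarith
  have hC : ∀ n : ℕ, (∑ i ∈ Finset.range n, D (k₁ + i)) ≤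
      D (k₁ - 1) + (b / a) * φ (E k₁) := by
    intro n
    have h1 := hinv n
    have h2 : 0 ≤ φ (E (k₁ + n)) := hφnonneg _ (hEmem _ (Nat.le_add_right _ _))
    have h3 : 0 ≤ D (k₁ + n - 1) := norm_nonneg _
    have hba : 0 ≤ b / a := le_of_lt (div_pos hb ha)
    nlinarith
  have hsum1 : Summable (fun i => D (k₁ + i)) := by
    apply summable_of_sum_range_le (fun i => norm_nonneg _) hC
  have hsum : Summable D := by
    rw [← summable_nat_add_iff k₁]
    have he : (fun i => D (i + k₁)) = fun i => D (k₁ + i) := by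
      funext i; rw [add_comm]
    rw [he]; exact hsum1
  refine ⟨hsum, ?_⟩
  have hcauchy : CauchySeq z := by
    apply cauchySeq_of_summable_dist
    convert hsum using 2 with n
    rw [dist_eq_norm, norm_sub_rev]
  exact cauchySeq_tendsto_of_complete hcauchy
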